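/- arXiv:1404.4004 — 4 statements merged into one kernel-verified Lean document; each statement's English description precedes it below -/
import Mathlib

section
/- In the n-dimensional hypertorus of arity l, if (s₁,...,s_k) ∈ R_j ↾ k with k ∈ {2,...,l}, then for every permutation σ of {1,...,k} and every index i ∈ {1,...,n} with i ≠ j, the permuted tuple (s_{σ(1)},...,s_{σ(k)}) is not in R_i ↾ k. -/
/-- The hypertorus point set, represented as residues. -/
abbrev TorusPt (n l : ℕ) := ZMod n × ZMod l × ZMod 3

def Good (n l : ℕ) [NeZero l] (j : ZMod n)
    (t : Fin l → TorusPt n l) : Prop :=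
  ∀ i : Fin l, i ≠ 0 →
    (t i).1 - (t 0).1 = j ∧
    (t i).2.1 - (t 0).2.1 = ((i : ℕ) : ZMod l) ∧
    (t i).2.2 - (t 0).2.2 = 1

/-- The relation `R_j ⊆ T^l` of the hypertorus. -/
def Rrel (n l : ℕ) [NeZero l] (j : ZMod n) : Set (Fin l → TorusPt n l) :=
  {t | Good n l j t}

/-- `k`-restriction of an `l`-ary relation: the set of `k`-prefixes. -/
def restrict {S : Type*} {l k : ℕ} (h : k ≤ l) (R : Set (Fin l → S)) :
    Set (Fin k → S) :=
  {s | ∃ t ∈ R, ∀ i : Fin k, s i = t (Fin.castLE h i)}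

theorem stmt2 (n l k : ℕ) [NeZero n] [NeZero l] (hn : 2 ≤ n) (hl : 2 ≤ l)
    (hk : 2 ≤ k) (hkl : k ≤ l) (j : ZMod n)
    (s : Fin k → TorusPt n l) (hs : s ∈ restrict hkl (Rrel n l j))
    (σ : Equiv.Perm (Fin k)) (i : ZMod n) (hij : i ≠ j) :
    (fun m => s (σ m)) ∉ restrict hkl (Rrel n l i) := by
  haveI : NeZero k := ⟨by omega⟩
  obtain ⟨u, hu, hus⟩ := hs
  rintro ⟨t, ht, hts⟩
  have h0 : Fin.castLE hkl (0 : Fin k) = 0 := rfl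
  have hcast : ∀ p : Fin k, p ≠ 0 → Fin.castLE hkl p ≠ 0 := by
    intro p hp hcontra
    exact hp (Fin.ext (by have h := congrArg Fin.val hcontra; rw [Fin.val_zero] at h; rw [Fin.val_zero]; exact h))
  by_cases hσ0 : σ 0 = 0
  · -- use index 1 and first coordinates
    have h1 : (1 : Fin k) ≠ 0 := by
      simp [Fin.ext_iff, Nat.one_mod_eq_one.mpr (by omega : k ≠ 1)]
    have hσ1 : σ 1 ≠ 0 := by
      intro hcontra
      exact h1 (σ.injective (hcontra.trans hσ0.symm))
    have ht1 := (ht (Fin.castLE hkl 1) (hcast 1 h1)).1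
    have hu1 := (hu (Fin.castLE hkl (σ 1)) (hcast _ hσ1)).1
    have e1 : s (σ 1) = t (Fin.castLE hkl 1) := hts 1
    have e2 : s (σ 1) = u (Fin.castLE hkl (σ 1)) := hus (σ 1)
    have e3 : s (σ 0) = t 0 := by have := hts 0; simpa [h0] using this
    have e4 : s 0 = u 0 := by have := hus 0; simpa [h0] using this
    rw [hσ0] at e3
    apply hij
    rw [← ht1, ← e1, ← hu1, ← e2, ← e3, e4]
  · -- use third coordinates
    have e1 : s (σ 0) = t 0 := by have := hts 0; simpa [h0] using this
    have e2 : s (σ 0) = u (Fin.castLE hkl (σ 0)) := hus (σ 0)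
    have hu1 := (hu (Fin.castLE hkl (σ 0)) (hcast _ hσ0)).2.2
    set m := σ.symm 0 with hm
    have hσm : σ m = 0 := by simp [hm]
    have hmne : m ≠ 0 := fun hcontra => hσ0 (hcontra ▸ hσm)
    have e3 : s 0 = t (Fin.castLE hkl m) := by simpa [hσm] using hts m
    have e4 : s 0 = u 0 := by have := hus 0; simpa [h0] using this
    have ht1 := (ht (Fin.castLE hkl m) (hcast _ hmne)).2.2
    rw [← e3, e4] at ht1
    rw [← e2, e1] at hu1
    have : (1 : ZMod 3) + 1 = 0 := by
      calc (1 : ZMod 3) + 1 = ((t 0).2.2 - (u 0).2.2) + ((u 0).2.2 - (t 0).2.2) := by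
            rw [hu1, ht1]
        _ = 0 := by ring
    exact absurd this (by decide)
end

section
/- In the n-dimensional hypertorus of arity l, if (s₁,...,s_k) ∈ R_j ↾ k with k ∈ {2,...,l}, then for every permutation μ of {1,...,k} other than the identity, the permuted tuple (s_{μ(1)},...,s_{μ(k)}) is not in R_j ↾ k. -/
lemma prefix_eqs {n l k : ℕ} [NeZero l] [NeZero k] (hkl : k ≤ l) (j : ZMod n)
    (s : Fin k → TorusPt n l) (hs : s ∈ restrict hkl (Rrel n l j)) :
    ∀ i : Fin k, i ≠ 0 →
      (s i).2.1 - (s 0).2.1 = ((i : ℕ) : ZMod l) ∧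
      (s i).2.2 - (s 0).2.2 = 1 := by
  obtain ⟨t, ht, hst⟩ := hs
  intro i hi
  have h0 : Fin.castLE hkl (0 : Fin k) = 0 := rfl
  have hne : Fin.castLE hkl i ≠ 0 := by
    intro h
    apply hi
    apply Fin.ext
    have := congrArg Fin.val h
    simpa using this
  have := ht (Fin.castLE hkl i) hne
  rw [hst i, hst 0, h0]
  exact ⟨by simpa using this.2.1, this.2.2⟩

theorem stmt3 (n l k : ℕ) [NeZero n] [NeZero l] (hn : 2 ≤ n) (hl : 2 ≤ l)
    (hk : 2 ≤ k) (hkl : k ≤ l) (j : ZMod n)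
    (s : Fin k → TorusPt n l) (hs : s ∈ restrict hkl (Rrel n l j))
    (μ : Equiv.Perm (Fin k)) (hμ : μ ≠ 1) :
    (fun m => s (μ m)) ∉ restrict hkl (Rrel n l j) := by
  intro hcon
  haveI : NeZero k := ⟨by omega⟩
  have H := prefix_eqs hkl j s hs
  have H' := prefix_eqs hkl j (fun m => s (μ m)) hcon
  -- first: μ 0 = 0
  have hμ0 : μ 0 = 0 := by
    by_contra h0
    have hi : μ.symm 0 ≠ 0 := by
      intro h
      apply h0
      have := congrArg μ h
      simpa using this.symm
    have h1 := (H' (μ.symm 0) hi).2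
    simp only [Equiv.apply_symm_apply] at h1
    have h2 := (H (μ 0) h0).2
    have : (0 : ZMod 3) = 2 := by
      have := congrArg₂ (· + ·) h1 h2
      simpa [sub_add_sub_comm, one_add_one_eq_two] using this
    exact absurd this (by decide)
  have key : ∀ i : Fin k, μ i = i := by
    intro i
    by_cases hi : i = 0
    · rw [hi, hμ0]
    · have hμi : μ i ≠ 0 := by
        intro h
        apply hi
        have := μ.injective (h.trans hμ0.symm)
        exact this
      have h1 := (H' i hi).1
      simp only [hμ0] at h1
      have h2 := (H (μ i) hμi).1
      have heq : (((μ i : ℕ) : ZMod l)) = ((i : ℕ) : ZMod l) := by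
        rw [← h1, ← h2]
      have hv := congrArg ZMod.val heq
      rw [ZMod.val_natCast_of_lt (lt_of_lt_of_le (μ i).isLt hkl),
          ZMod.val_natCast_of_lt (lt_of_lt_of_le i.isLt hkl)] at hv
      exact Fin.ext hv
  exact hμ (Equiv.ext key)
end

section
/- Let M be a structure with two binary relations H and V, and suppose M satisfies: (1) for every x there is y with H(x,y); (2) for every x there is y with V(x,y); (3) for all x,y,z,w, if H(x,y), V(x,z), and H(z,w), then V(y,w). Then there exists a function h : ℕ × ℕ → M such that H(h(i,j), h(i+1,j)) holds for all i,j ∈ ℕ and V(h(i,j), h(i,j+1)) holds for all i,j ∈ ℕ (i.e., h is a homomorphism from the standard grid on ℕ × ℕ into M). -/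
theorem stmt5 (M : Type*) [Nonempty M] (H V : M → M → Prop)
    (h1 : ∀ x, ∃ y, H x y)
    (h2 : ∀ x, ∃ y, V x y)
    (h3 : ∀ x y z w, H x y → V x z → H z w → V y w) :
    ∃ h : ℕ × ℕ → M,
      (∀ i j : ℕ, H (h (i, j)) (h (i + 1, j))) ∧
      (∀ i j : ℕ, V (h (i, j)) (h (i, j + 1))) := by
  choose f hf using h1
  choose g hg using h2
  obtain ⟨x0⟩ := ‹Nonempty M›
  refine ⟨fun p => f^[p.1] (g^[p.2] x0), ?_, ?_⟩
  · intro i j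
    simp only [Function.iterate_succ', Function.comp_apply]
    exact hf _
  · intro i j
    have key : ∀ (i : ℕ) (y : M), V (f^[i] y) (f^[i] (g y)) := by
      intro i
      induction i with
      | zero => intro y; exact hg y
      | succ n ih =>
        intro y
        simp only [Function.iterate_succ', Function.comp_apply]
        exact h3 _ _ _ _ (hf _) (ih y) (hf _)
    simpa [Function.iterate_succ_apply'] using key i (g^[j] x0)
end

section
/- Let T be a finite set of tiles, where a tile t assigns colours t_R, t_L, t_T, t_B. Suppose there exists a structure M on domain M with binary relations H, V and unary predicates (P_t)_{t ∈ T} satisfying: (1) ∀x∃y H(x,y); (2) ∀x∃y V(x,y); (3) ∀x,y,z,w (H(x,y) ∧ V(x,z) ∧ H(z,w) → V(y,w)); (4) every element satisfies exactly one P_t; (5) for all tiles t,t' with t_R ≠ t'_L and all x,y, P_t(x) ∧ P_{t'}(y) implies ¬H(x,y); (6) for all tiles t,t' with t_T ≠ t'_B and all x,y, P_t(x) ∧ P_{t'}(y) implies ¬V(x,y). Then there exists a T-tiling of ℕ × ℕ, i.e., a function f : ℕ × ℕ → T with f(i,j)_R = f(i+1,j)_L and f(i,j)_T = f(i,j+1)_B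 for all i,j. -/
theorem stmt7 {C Tl M : Type*} [Fintype Tl]
    (tR tL tT tB : Tl → C)
    (H V : M → M → Prop) (P : Tl → M → Prop)
    (h1 : ∀ x, ∃ y, H x y)
    (h2 : ∀ x, ∃ y, V x y)
    (h3 : ∀ x y z w, H x y → V x z → H z w → V y w)
    (h4 : ∀ x, ∃! t, P t x)
    (h5 : ∀ t t', tR t ≠ tL t' → ∀ x y, P t x → P t' y → ¬ H x y)
    (h6 : ∀ t t', tT t ≠ tB t' → ∀ x y, P t x → P t' y → ¬ V x y)
    [Nonempty M] :
    ∃ f : ℕ × ℕ → Tl, ∀ i j : ℕ,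
      tR (f (i, j)) = tL (f (i + 1, j)) ∧ tT (f (i, j)) = tB (f (i, j + 1)) := by
  classical
  obtain ⟨x0⟩ := ‹Nonempty M›
  set hf : M → M := fun x => (h1 x).choose with hhf
  set vf : M → M := fun x => (h2 x).choose with hvf
  have hH : ∀ x, H x (hf x) := fun x => (h1 x).choose_spec
  have hV : ∀ x, V x (vf x) := fun x => (h2 x).choose_spec
  set g : ℕ × ℕ → M := fun p => hf^[p.1] (vf^[p.2] x0) with hg
  have gH : ∀ i j, H (g (i, j)) (g (i + 1, j)) := by
    intro i j
    simp only [hg, Function.iterate_succ_apply']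
    exact hH _
  have gV : ∀ i j, V (g (i, j)) (g (i, j + 1)) := by
    intro i j
    induction i with
    | zero => simpa [hg, Function.iterate_succ_apply'] using hV _
    | succ n ih =>
      have := h3 _ _ _ _ (gH n j) ih (gH n (j + 1))
      simpa [hg, Function.iterate_succ_apply'] using this
  refine ⟨fun p => (h4 (g p)).choose, fun i j => ?_⟩
  have hP : ∀ p : ℕ × ℕ, P ((h4 (g p)).choose) (g p) := fun p => (h4 (g p)).choose_spec.1
  constructor
  · by_contra hne
    exact h5 _ _ hne _ _ (hP (i, j)) (hP (i + 1, j)) (gH i j)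
  · by_contra hne
    exact h6 _ _ hne _ _ (hP (i, j)) (hP (i, j + 1)) (gV i j)
end
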